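/- (Free-fall/hydrodynamical time.) Let G, M, R, T > 0 and let λ : [0,T] → ℝ be continuous, twice differentiable on [0,T), with λ(0) = R, λ'(0) = 0, λ(t) > 0 and λ'(t) ≤ 0 for all t ∈ [0,T), λ(T) = 0, and λ''(t) = −G·M/λ(t)² for all t ∈ (0,T). Then T = (π/2)·R^{3/2}/√(2·G·M); equivalently, with ρ₀ = 3M/(4π R³), T = √(3π/(32·G·ρ₀)). -/

import Mathlib

open Set

lemma hasDerivAt_A (K R : ℝ) (hK : 0 < K) (hR : 0 < R) (y : ℝ) (hy0 : 0 < y) (hyR : y < R) :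
    HasDerivAt (fun x => (R ^ ((3:ℝ)/2) / Real.sqrt K) *
        (Real.arcsin (Real.sqrt (x/R)) - Real.sqrt (x/R) * Real.sqrt (1 - x/R)))
      (Real.sqrt y * Real.sqrt R / (Real.sqrt K * Real.sqrt (R - y))) y := by
  have hu0 : 0 < y / R := div_pos hy0 hR
  have hu1 : y / R < 1 := (div_lt_one hR).mpr hyR
  have h1 : HasDerivAt (fun x : ℝ => Real.sqrt (x / R)) (1 / (2 * Real.sqrt (y/R)) * (1/R)) y := by
    have := (Real.hasDerivAt_sqrt (ne_of_gt hu0)).comp y ((hasDerivAt_id y).div_const R)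
    exact this
  have hsq : Real.sqrt (y/R) ^ 2 = y / R := Real.sq_sqrt hu0.le
  have hs1 : Real.sqrt (y/R) ≠ 1 := by
    intro h; rw [h] at hsq; norm_num at hsq; linarith
  have hsm1 : Real.sqrt (y/R) ≠ -1 := by
    intro h; have := Real.sqrt_nonneg (y/R); rw [h] at this; linarith
  have h2 : HasDerivAt (fun x : ℝ => Real.arcsin (Real.sqrt (x/R)))
      ((1 / Real.sqrt (1 - Real.sqrt (y/R) ^ 2)) * (1 / (2 * Real.sqrt (y/R)) * (1/R))) y :=
    by exact (Real.hasDerivAt_arcsin hsm1 hs1).comp y h1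
  have h3 : HasDerivAt (fun x : ℝ => Real.sqrt (1 - x / R))
      (1 / (2 * Real.sqrt (1 - y/R)) * (-(1/R))) y := by
    have hd : HasDerivAt (fun x : ℝ => 1 - x / R) (-(1/R)) y := by
      exact ((hasDerivAt_const y (1:ℝ)).sub ((hasDerivAt_id y).div_const R)).congr_deriv (by ring)
    have := (Real.hasDerivAt_sqrt (by intro h; rw [sub_eq_zero] at h; linarith : (1 : ℝ) - y/R ≠ 0)).comp y hd
    exact this
  have h4 := (h2.sub (h1.mul h3)).const_mul (R ^ ((3:ℝ)/2) / Real.sqrt K)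
  refine h4.congr_deriv (Eq.symm ?_)
  rw [hsq]
  set s := Real.sqrt (y/R) with hs
  set c := Real.sqrt (1 - y/R) with hc
  have hspos : 0 < s := Real.sqrt_pos.mpr hu0
  have hcpos : 0 < c := Real.sqrt_pos.mpr (by linarith)
  have hrpos : 0 < Real.sqrt R := Real.sqrt_pos.mpr hR
  have hKpos : 0 < Real.sqrt K := Real.sqrt_pos.mpr hK
  have hsy : Real.sqrt y = s * Real.sqrt R := by
    rw [hs, ← Real.sqrt_mul hu0.le]
    congr 1; field_simp
  have hcy : Real.sqrt (R - y) = c * Real.sqrt R := by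
    rw [hc, ← Real.sqrt_mul (by linarith : (0:ℝ) ≤ 1 - y/R)]
    congr 1; field_simp
  have hr3 : R ^ ((3:ℝ)/2) = R * Real.sqrt R := by
    rw [Real.sqrt_eq_rpow, ← Real.rpow_one_add' hR.le (by norm_num)]
    norm_num
  have hs2 : s ^ 2 = y / R := hsq
  have hc2 : c ^ 2 = 1 - s ^ 2 := by rw [hs2, hc]; exact Real.sq_sqrt (by linarith)
  have hr2 : Real.sqrt R ^ 2 = R := Real.sq_sqrt hR.le
  rw [hsy, hcy, hr3]
  have hR' : R ≠ 0 := hR.ne'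
  field_simp
  set r := Real.sqrt R
  set k := Real.sqrt K
  linear_combination hc2

/-- Free-fall (hydrodynamical) time of a pressureless collapsing sphere:
`T = (π/2)·R^{3/2}/√(2GM) = √(3π/(32Gρ₀))` with `ρ₀ = 3M/(4πR³)`. -/
theorem stmt6 (G M R T : ℝ) (hG : 0 < G) (hM : 0 < M) (hR : 0 < R) (hT : 0 < T)
    (f v : ℝ → ℝ)
    (hf_cont : ContinuousOn f (Icc 0 T))
    (hf_deriv : ∀ t ∈ Ico (0 : ℝ) T, HasDerivWithinAt f (v t) (Ico 0 T) t)
    (hv_diff : ∀ t ∈ Ico (0 : ℝ) T, DifferentiableWithinAt ℝ v (Ico 0 T) t)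
    (hv_deriv : ∀ t ∈ Ioo (0 : ℝ) T, HasDerivAt v (-(G * M) / (f t) ^ 2) t)
    (hf0 : f 0 = R) (hv0 : v 0 = 0)
    (hf_pos : ∀ t ∈ Ico (0 : ℝ) T, 0 < f t)
    (hv_nonpos : ∀ t ∈ Ico (0 : ℝ) T, v t ≤ 0)
    (hfT : f T = 0) :
    T = (Real.pi / 2) * R ^ ((3 : ℝ) / 2) / Real.sqrt (2 * G * M) ∧
      T = Real.sqrt (3 * Real.pi / (32 * G * (3 * M / (4 * Real.pi * R ^ 3)))) := by
  set K := 2 * G * M with hKdef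
  have hK : 0 < K := by positivity
  have hv_cont : ContinuousOn v (Ico 0 T) := fun t ht => (hv_diff t ht).continuousWithinAt
  -- derivative of f as HasDerivAt on the interior
  have hf_deriv' : ∀ t ∈ Ioo (0:ℝ) T, HasDerivAt f (v t) t := by
    intro t ht
    exact (hf_deriv t ⟨ht.1.le, ht.2⟩).hasDerivAt
      (Filter.mem_of_superset (Ioo_mem_nhds ht.1 ht.2) Ioo_subset_Ico_self)
  -- v is negative on the interior
  have hv_neg : ∀ t ∈ Ioo (0:ℝ) T, v t < 0 := by
    intro t ht
    have hanti : StrictAntiOn v (Icc 0 t) := by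
      apply strictAntiOn_of_deriv_neg (convex_Icc 0 t)
      · exact hv_cont.mono (fun x hx => ⟨hx.1, lt_of_le_of_lt hx.2 ht.2⟩)
      · intro x hx
        rw [interior_Icc] at hx
        have hx' : x ∈ Ioo (0:ℝ) T := ⟨hx.1, hx.2.trans ht.2⟩
        rw [(hv_deriv x hx').deriv]
        have hfx : 0 < f x := hf_pos x ⟨hx'.1.le, hx'.2⟩
        exact div_neg_of_neg_of_pos (by nlinarith) (by positivity)
    have := hanti (left_mem_Icc.mpr ht.1.le) (right_mem_Icc.mpr ht.1.le) ht.1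
    rwa [hv0] at this
  -- f is strictly less than R on the interior
  have hf_lt : ∀ t ∈ Ioo (0:ℝ) T, f t < R := by
    intro t ht
    have hanti : StrictAntiOn f (Icc 0 t) := by
      apply strictAntiOn_of_deriv_neg (convex_Icc 0 t)
      · exact hf_cont.mono (fun x hx => ⟨hx.1, hx.2.trans ht.2.le⟩)
      · intro x hx
        rw [interior_Icc] at hx
        have hx' : x ∈ Ioo (0:ℝ) T := ⟨hx.1, hx.2.trans ht.2⟩
        rw [(hf_deriv' x hx').deriv]
        exact hv_neg x hx'
    have := hanti (left_mem_Icc.mpr ht.1.le) (right_mem_Icc.mpr ht.1.le) ht.1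
    rwa [hf0] at this
  -- energy conservation : v t ^ 2 = K * (R - f t) / (f t * R)
  have energy : ∀ t ∈ Ioo (0:ℝ) T, v t ^ 2 = K * (R - f t) / (f t * R) := by
    intro t ht
    set E : ℝ → ℝ := fun x => v x ^ 2 - K / f x with hE
    have hsub : Icc (0:ℝ) t ⊆ Ico 0 T := fun x hx => ⟨hx.1, lt_of_le_of_lt hx.2 ht.2⟩
    have hcont : ContinuousOn E (Icc 0 t) := by
      apply ContinuousOn.sub
      · exact ((hv_cont.mono hsub).pow 2)
      · exact continuousOn_const.div ((hf_cont.mono (fun x hx => ⟨hx.1, (hx.2.trans ht.2.le)⟩)))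
          (fun x hx => (hf_pos x (hsub hx)).ne')
    have hder : ∀ x ∈ Ico (0:ℝ) t, HasDerivWithinAt E 0 (Ici x) x := by
      intro x hx
      rcases eq_or_lt_of_le hx.1 with h0 | h0
      · -- x = 0
        subst h0
        have hvd := (hv_diff 0 ⟨le_refl 0, hT⟩).hasDerivWithinAt
        have hfd := hf_deriv 0 ⟨le_refl 0, hT⟩
        have hEd : HasDerivWithinAt E
            (2 * v 0 ^ 1 * derivWithin v (Ico 0 T) 0 - (0 * f 0 - K * v 0) / f 0 ^ 2)
            (Ico 0 T) 0 :=
          (hvd.pow 2).sub ((hasDerivWithinAt_const 0 _ K).div hfd (hf_pos 0 ⟨le_refl 0, hT⟩).ne')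
        have : (2 * v 0 ^ 1 * derivWithin v (Ico 0 T) 0 - (0 * f 0 - K * v 0) / f 0 ^ 2) = 0 := by
          rw [hv0]; ring
        rw [this] at hEd
        exact hEd.mono_of_mem_nhdsWithin (Ico_mem_nhdsGE_of_mem ⟨le_refl 0, hT⟩)
      · -- 0 < x
        have hx' : x ∈ Ioo (0:ℝ) T := ⟨h0, hx.2.trans ht.2⟩
        have hfx : 0 < f x := hf_pos x ⟨hx'.1.le, hx'.2⟩
        have hEd : HasDerivAt E
            (2 * v x ^ 1 * (-(G*M) / f x ^ 2) - (0 * f x - K * v x) / f x ^ 2) x :=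
          ((hv_deriv x hx').pow 2).sub
            ((hasDerivAt_const x K).div (hf_deriv' x hx') hfx.ne')
        have heq : (2 * v x ^ 1 * (-(G*M) / f x ^ 2) - (0 * f x - K * v x) / f x ^ 2) = 0 := by
          rw [hKdef]; field_simp; ring
        rw [heq] at hEd
        exact hEd.hasDerivWithinAt
    have hconst := constant_of_has_deriv_right_zero hcont hder t (right_mem_Icc.mpr ht.1.le)
    have hE0 : E 0 = -(K / R) := by rw [hE]; simp [hv0, hf0]
    rw [hE0] at hconst
    have hft : 0 < f t := hf_pos t ⟨ht.1.le, ht.2⟩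
    have hvt : v t ^ 2 - K / f t = -(K / R) := hconst
    field_simp at hvt ⊢
    linarith [hvt]
  -- velocity formula
  have hv_eq : ∀ t ∈ Ioo (0:ℝ) T,
      v t * Real.sqrt (f t) * Real.sqrt R = -(Real.sqrt K * Real.sqrt (R - f t)) := by
    intro t ht
    have hft : 0 < f t := hf_pos t ⟨ht.1.le, ht.2⟩
    have hfR : f t < R := hf_lt t ht
    have hvneg := hv_neg t ht
    have ha : Real.sqrt (f t) ^ 2 = f t := Real.sq_sqrt hft.le
    have hb : Real.sqrt (R - f t) ^ 2 = R - f t := Real.sq_sqrt (by linarith)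
    have hr : Real.sqrt R ^ 2 = R := Real.sq_sqrt hR.le
    have hk : Real.sqrt K ^ 2 = K := Real.sq_sqrt hK.le
    have hapos : 0 < Real.sqrt (f t) := Real.sqrt_pos.mpr hft
    have hbpos : 0 < Real.sqrt (R - f t) := Real.sqrt_pos.mpr (by linarith)
    have hrpos : 0 < Real.sqrt R := Real.sqrt_pos.mpr hR
    have hkpos : 0 < Real.sqrt K := Real.sqrt_pos.mpr hK
    set X := v t * Real.sqrt (f t) * Real.sqrt R with hX
    set Y := Real.sqrt K * Real.sqrt (R - f t) with hY
    have hX2 : X ^ 2 = Y ^ 2 := by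
      have he := energy t ht
      rw [hX, hY, mul_pow, mul_pow, mul_pow, ha, hb, hr, hk, he]
      field_simp
    have hXneg : X < 0 := by
      rw [hX]
      exact mul_neg_of_neg_of_pos (mul_neg_of_neg_of_pos hvneg hapos) hrpos
    have hYpos : 0 < Y := mul_pos hkpos hbpos
    have h0 : (X - Y) * (X + Y) = 0 := by linear_combination hX2
    rcases mul_eq_zero.mp h0 with h | h
    · exfalso; have : X = Y := by linarith
      linarith
    · linarith
  -- the remaining-time function
  set A : ℝ → ℝ := fun x => (R ^ ((3:ℝ)/2) / Real.sqrt K) *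
      (Real.arcsin (Real.sqrt (x/R)) - Real.sqrt (x/R) * Real.sqrt (1 - x/R)) with hAdef
  have hAcont : Continuous A := by
    apply Continuous.mul continuous_const
    exact (Real.continuous_arcsin.comp (Real.continuous_sqrt.comp (continuous_id.div_const R))).sub
      ((Real.continuous_sqrt.comp (continuous_id.div_const R)).mul
        (Real.continuous_sqrt.comp (continuous_const.sub (continuous_id.div_const R))))
  have hA0 : A 0 = 0 := by
    rw [hAdef]; simp
  -- constancy of t + A (f t)
  have key : ∀ s ∈ Ioo (0:ℝ) T, T = s + A (f s) := by
    intro s hs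
    have hψcont : ContinuousOn (fun t => t + A (f t)) (Icc s T) :=
      continuousOn_id.add (hAcont.comp_continuousOn
        (hf_cont.mono (fun x hx => ⟨hs.1.le.trans hx.1, hx.2⟩)))
    have hψder : ∀ x ∈ Ico s T, HasDerivWithinAt (fun t => t + A (f t)) 0 (Ici x) x := by
      intro x hx
      have hx' : x ∈ Ioo (0:ℝ) T := ⟨lt_of_lt_of_le hs.1 hx.1, hx.2⟩
      have hfx0 : 0 < f x := hf_pos x ⟨hx'.1.le, hx'.2⟩
      have hfxR : f x < R := hf_lt x hx'
      have hapos : 0 < Real.sqrt (f x) := Real.sqrt_pos.mpr hfx0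
      have hbpos : 0 < Real.sqrt (R - f x) := Real.sqrt_pos.mpr (by linarith)
      have hrpos : 0 < Real.sqrt R := Real.sqrt_pos.mpr hR
      have hkpos : 0 < Real.sqrt K := Real.sqrt_pos.mpr hK
      have hA' := hasDerivAt_A K R hK hR (f x) hfx0 hfxR
      have hcomp := hA'.comp x (hf_deriv' x hx')
      have htotal := (hasDerivAt_id x).add hcomp
      have hval : 1 + Real.sqrt (f x) * Real.sqrt R / (Real.sqrt K * Real.sqrt (R - f x)) * v x
          = 0 := by
        have := hv_eq x hx'
        field_simp
        linarith [this]
      have : HasDerivAt (fun t => t + A (f t)) 0 x := by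
        have heq : (fun t => t + A (f t)) = (fun t => t + (A ∘ f) t) := rfl
        rw [heq, ← hval]
        exact htotal
      exact this.hasDerivWithinAt
    have hcst := constant_of_has_deriv_right_zero hψcont hψder T (right_mem_Icc.mpr hs.2.le)
    rw [hfT, hA0, add_zero] at hcst
    exact hcst
  -- take the limit s → 0⁺
  have hne : (nhdsWithin (0:ℝ) (Ioo 0 T)).NeBot := by
    rw [← mem_closure_iff_nhdsWithin_neBot, closure_Ioo hT.ne]
    exact ⟨le_refl 0, hT.le⟩
  have htend1 : Filter.Tendsto (fun s => s + A (f s)) (nhdsWithin (0:ℝ) (Ioo 0 T))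
      (nhds (0 + A R)) := by
    apply Filter.Tendsto.add
    · exact Filter.Tendsto.mono_left Filter.tendsto_id nhdsWithin_le_nhds
    · have h1 : Filter.Tendsto f (nhdsWithin (0:ℝ) (Ioo 0 T)) (nhds R) := by
        have := (hf_cont 0 ⟨le_refl 0, hT.le⟩).mono
          (fun x (hx : x ∈ Ioo (0:ℝ) T) => ⟨hx.1.le, hx.2.le⟩)
        rw [ContinuousWithinAt, hf0] at this
        exact this
      exact (hAcont.tendsto R).comp h1
  have htend2 : Filter.Tendsto (fun s => s + A (f s)) (nhdsWithin (0:ℝ) (Ioo 0 T))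
      (nhds T) := by
    apply Filter.Tendsto.congr' _ tendsto_const_nhds
    filter_upwards [self_mem_nhdsWithin] with s hs
    exact key s hs
  have hTAR : T = 0 + A R := tendsto_nhds_unique htend2 htend1
  rw [zero_add] at hTAR
  have hAR : A R = R ^ ((3:ℝ)/2) / Real.sqrt K * (Real.pi / 2) := by
    rw [hAdef]
    simp [div_self hR.ne', Real.arcsin_one]
  have hfirst : T = Real.pi / 2 * R ^ ((3:ℝ)/2) / Real.sqrt (2*G*M) := by
    rw [hTAR, hAR, ← hKdef]; ring
  refine ⟨hfirst, ?_⟩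
  -- second form
  have hEpos : 0 < Real.pi / 2 * R ^ ((3:ℝ)/2) / Real.sqrt (2*G*M) := by
    have : (0:ℝ) < R ^ ((3:ℝ)/2) := Real.rpow_pos_of_pos hR _
    have h2 : (0:ℝ) < Real.sqrt (2*G*M) := Real.sqrt_pos.mpr (by positivity)
    positivity
  have hsq2 : (3:ℝ) * Real.pi / (32 * G * (3 * M / (4 * Real.pi * R ^ 3)))
      = (Real.pi / 2 * R ^ ((3:ℝ)/2) / Real.sqrt (2*G*M)) ^ 2 := by
    have hr32 : (R ^ ((3:ℝ)/2)) ^ 2 = R ^ 3 := by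
      rw [← Real.rpow_natCast (R ^ ((3:ℝ)/2)) 2, ← Real.rpow_mul hR.le]
      norm_num
    have hk2 : Real.sqrt (2*G*M) ^ 2 = 2*G*M := Real.sq_sqrt (by positivity)
    have hkne : Real.sqrt (2*G*M) ≠ 0 := (Real.sqrt_pos.mpr (by positivity)).ne'
    have hpi : Real.pi ≠ 0 := Real.pi_ne_zero
    have hGne : G ≠ 0 := hG.ne'
    have hMne : M ≠ 0 := hM.ne'
    have hRne : R ≠ 0 := hR.ne'
    rw [div_pow, mul_pow, hr32, hk2]
    field_simp
    ring
  rw [hfirst, hsq2, Real.sqrt_sq hEpos.le]
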